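/- Let f be continuous, positive, strictly decreasing, integrable on [0,∞) with F(s) = ∫_s^∞ f, and for each M > 0 let μ(M) satisfy √(μ(M)) = (√2/2)∫₀^M (F(s)−F(M))^{−1/2} ds. Then μ is strictly increasing in M and μ(M) → ∞ as M → ∞. -/

import Mathlib

open MeasureTheory Set Filter

private lemma rpow_neg_half_eq {x : ℝ} (hx : 0 ≤ x) :
    x ^ (-(1/2) : ℝ) = (Real.sqrt x)⁻¹ := by
  rw [Real.rpow_neg hx, Real.sqrt_eq_rpow]

section Aux

variable {f F : ℝ → ℝ}

private lemma aux_Fdiff (hint : IntegrableOn f (Ici 0))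
    (hF : ∀ s, F s = ∫ σ in Ioi s, f σ)
    {a b : ℝ} (ha : 0 ≤ a) (hab : a ≤ b) :
    F a - F b = ∫ t in a..b, f t := by
  have hb : 0 ≤ b := ha.trans hab
  have h1 : IntegrableOn f (Ioc a b) := hint.mono_set (fun x hx => ha.trans hx.1.le)
  have h2 : IntegrableOn f (Ioi b) := hint.mono_set (fun x hx => hb.trans (le_of_lt hx))
  have hsplit : F a = (∫ t in Ioc a b, f t) + ∫ t in Ioi b, f t := by
    rw [hF a, ← Set.Ioc_union_Ioi_eq_Ioi hab,
      setIntegral_union Set.Ioc_disjoint_Ioi_same measurableSet_Ioi h1 h2]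
  rw [hsplit, hF b, intervalIntegral.integral_of_le hab]
  ring

private lemma aux_fi (hcont : ContinuousOn f (Ici 0)) {a b : ℝ} (ha : 0 ≤ a) (hab : a ≤ b) :
    IntervalIntegrable f volume a b :=
  (hcont.mono (fun x hx => by
    rw [uIcc_of_le hab] at hx
    exact ha.trans hx.1)).intervalIntegrable

private lemma aux_lb (hcont : ContinuousOn f (Ici 0))
    (hanti : StrictAntiOn f (Ici 0)) (hint : IntegrableOn f (Ici 0))
    (hF : ∀ s, F s = ∫ σ in Ioi s, f σ)
    {a b : ℝ} (ha : 0 ≤ a) (hab : a ≤ b) :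
    f b * (b - a) ≤ F a - F b := by
  have hb : 0 ≤ b := ha.trans hab
  rw [aux_Fdiff hint hF ha hab]
  have hfi : IntervalIntegrable f volume a b := aux_fi hcont ha hab
  have hmono : ∀ x ∈ Icc a b, f b ≤ f x := by
    intro x hx
    rcases eq_or_lt_of_le hx.2 with h | h
    · exact le_of_eq (by rw [h])
    · exact (hanti (ha.trans hx.1) hb h).le
  calc f b * (b - a) = ∫ _ in a..b, f b := by
        rw [intervalIntegral.integral_const, smul_eq_mul]; ring
    _ ≤ ∫ t in a..b, f t :=
        intervalIntegral.integral_mono_on hab intervalIntegrable_const hfi hmono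

private lemma aux_pos (hcont : ContinuousOn f (Ici 0)) (hpos : ∀ s, 0 ≤ s → 0 < f s)
    (hanti : StrictAntiOn f (Ici 0)) (hint : IntegrableOn f (Ici 0))
    (hF : ∀ s, F s = ∫ σ in Ioi s, f σ)
    {a b : ℝ} (ha : 0 ≤ a) (hab : a < b) :
    0 < F a - F b :=
  lt_of_lt_of_le (mul_pos (hpos b (ha.trans hab.le)) (by linarith))
    (aux_lb hcont hanti hint hF ha hab.le)

private lemma aux_nonneg (hcont : ContinuousOn f (Ici 0)) (hpos : ∀ s, 0 ≤ s → 0 < f s)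
    (hanti : StrictAntiOn f (Ici 0)) (hint : IntegrableOn f (Ici 0))
    (hF : ∀ s, F s = ∫ σ in Ioi s, f σ)
    {a b : ℝ} (ha : 0 ≤ a) (hab : a ≤ b) :
    0 ≤ F a - F b := by
  rcases eq_or_lt_of_le hab with h | h
  · rw [h]; simp
  · exact (aux_pos hcont hpos hanti hint hF ha h).le

/-- interval integrability of the singular integrand. -/
private lemma aux_int (hcont : ContinuousOn f (Ici 0)) (hpos : ∀ s, 0 ≤ s → 0 < f s)
    (hanti : StrictAntiOn f (Ici 0)) (hint : IntegrableOn f (Ici 0))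
    (hF : ∀ s, F s = ∫ σ in Ioi s, f σ) {M : ℝ} (hM : 0 < M) :
    IntervalIntegrable (fun s => (F s - F M) ^ (-(1/2) : ℝ)) volume 0 M := by
  rw [intervalIntegrable_iff_integrableOn_Ioc_of_le hM.le]
  -- continuity of s ↦ F s - F M on [0, M]
  have hFc : ContinuousOn (fun s => F s - F M) (Icc 0 M) := by
    have hfint : IntegrableOn f (uIcc 0 M) := by
      rw [uIcc_of_le hM.le]
      exact hint.mono_set (fun x hx => hx.1)
    have h := intervalIntegral.continuousOn_primitive_interval_left (μ := volume) hfint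
    rw [uIcc_of_le hM.le] at h
    exact h.congr (fun s hs => aux_Fdiff hint hF hs.1 hs.2)
  have hmeasb : AEMeasurable (fun s => F s - F M) (volume.restrict (Ioc 0 M)) :=
    (hFc.aemeasurable measurableSet_Icc).mono_measure
      (Measure.restrict_mono Ioc_subset_Icc_self le_rfl)
  have hmeas : AEStronglyMeasurable (fun s => (F s - F M) ^ (-(1/2) : ℝ))
      (volume.restrict (Ioc 0 M)) := by
    have h1 : Measurable fun x : ℝ => (Real.sqrt x)⁻¹ := Real.continuous_sqrt.measurable.inv
    refine ((h1.comp_aemeasurable hmeasb).aestronglyMeasurable).congr ?_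
    filter_upwards [ae_restrict_mem measurableSet_Ioc] with s hs
    exact (rpow_neg_half_eq (aux_nonneg hcont hpos hanti hint hF hs.1.le hs.2)).symm
  have hdom : IntegrableOn
      (fun s => (f M) ^ (-(1/2) : ℝ) * (M - s) ^ (-(1/2) : ℝ)) (Ioc 0 M) := by
    have h0 : IntervalIntegrable (fun x : ℝ => x ^ (-(1/2) : ℝ)) volume 0 M :=
      intervalIntegral.intervalIntegrable_rpow' (by norm_num)
    have h1 := (h0.comp_sub_left M).symm
    simp only [sub_zero, sub_self] at h1
    exact (intervalIntegrable_iff_integrableOn_Ioc_of_le hM.le).mp (h1.const_mul _)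
  refine hdom.mono' hmeas ?_
  filter_upwards [ae_restrict_mem measurableSet_Ioc] with s hs
  have hs0 : 0 ≤ s := hs.1.le
  have hnn : 0 ≤ F s - F M := aux_nonneg hcont hpos hanti hint hF hs0 hs.2
  rw [Real.norm_eq_abs, abs_of_nonneg (Real.rpow_nonneg hnn _)]
  rcases eq_or_lt_of_le hs.2 with h | h
  · subst h
    simp [Real.zero_rpow (by norm_num : (-(1/2) : ℝ) ≠ 0)]
  · have hfM : 0 < f M := hpos M hM.le
    have hlb : f M * (M - s) ≤ F s - F M := aux_lb hcont hanti hint hF hs0 h.le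
    have hlbpos : 0 < f M * (M - s) := mul_pos hfM (by linarith)
    calc (F s - F M) ^ (-(1/2) : ℝ) ≤ (f M * (M - s)) ^ (-(1/2) : ℝ) :=
          Real.rpow_le_rpow_of_nonpos hlbpos hlb (by norm_num)
      _ = (f M) ^ (-(1/2) : ℝ) * (M - s) ^ (-(1/2) : ℝ) :=
          Real.mul_rpow hfM.le (by linarith)

end Aux

theorem stmt_17 (f F μ : ℝ → ℝ)
    (hcont : ContinuousOn f (Ici 0))
    (hpos : ∀ s, 0 ≤ s → 0 < f s)
    (hanti : StrictAntiOn f (Ici 0))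
    (hint : IntegrableOn f (Ici 0))
    (hF : ∀ s, F s = ∫ σ in Ioi s, f σ)
    (hμnonneg : ∀ M, 0 < M → 0 ≤ μ M)
    (hμ : ∀ M, 0 < M →
      Real.sqrt (μ M) = (Real.sqrt 2 / 2) * ∫ s in (0:ℝ)..M, (F s - F M) ^ (-(1/2) : ℝ)) :
    StrictMonoOn μ (Ioi 0) ∧ Tendsto μ atTop atTop := by
  have hF0 : 0 < F 0 := by
    have h1 : 0 < F 0 - F 1 := aux_pos hcont hpos hanti hint hF le_rfl one_pos
    have h2 : 0 ≤ F 1 := by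
      rw [hF 1]
      exact setIntegral_nonneg measurableSet_Ioi fun x hx =>
        (hpos x (by linarith [mem_Ioi.mp hx])).le
    linarith
  set c : ℝ := Real.sqrt 2 / 2 with hc
  have hcpos : 0 < c := by
    rw [hc]; positivity
  -- strict inequality between the two integrals
  have hIlt : ∀ M₁ M₂ : ℝ, 0 < M₁ → M₁ < M₂ →
      (∫ s in (0:ℝ)..M₁, (F s - F M₁) ^ (-(1/2) : ℝ)) <
      ∫ s in (0:ℝ)..M₂, (F s - F M₂) ^ (-(1/2) : ℝ) := by
    intro M₁ M₂ hM₁ h12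
    have hM₂ : 0 < M₂ := hM₁.trans h12
    have hcv : ∀ M : ℝ, 0 < M →
        (∫ s in (0:ℝ)..M, (F s - F M) ^ (-(1/2) : ℝ)) =
        ∫ σ in (0:ℝ)..1, M * (F (M * σ) - F M) ^ (-(1/2) : ℝ) := by
      intro M hM
      have h := intervalIntegral.integral_comp_mul_left
        (fun s => (F s - F M) ^ (-(1/2) : ℝ)) (a := 0) (b := 1) hM.ne'
      rw [mul_zero, mul_one] at h
      rw [intervalIntegral.integral_const_mul, h, smul_eq_mul,
        ← mul_assoc, mul_inv_cancel₀ hM.ne', one_mul]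
    have hGint : ∀ M : ℝ, 0 < M → IntervalIntegrable
        (fun σ => M * (F (M * σ) - F M) ^ (-(1/2) : ℝ)) volume 0 1 := by
      intro M hM
      have h := (aux_int hcont hpos hanti hint hF hM).comp_mul_left (c := M)
      rw [zero_div, div_self hM.ne'] at h
      exact h.const_mul M
    have hptw : ∀ σ ∈ Ioo (0:ℝ) 1,
        M₁ * (F (M₁ * σ) - F M₁) ^ (-(1/2) : ℝ) <
        M₂ * (F (M₂ * σ) - F M₂) ^ (-(1/2) : ℝ) := by
      intro σ hσ
      obtain ⟨hσ0, hσ1⟩ := hσ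
      have ha₁ : 0 < M₁ * σ := mul_pos hM₁ hσ0
      have ha₂ : 0 < M₂ * σ := mul_pos hM₂ hσ0
      have hab₁ : M₁ * σ < M₁ := by nlinarith
      have hab₂ : M₂ * σ < M₂ := by nlinarith
      have hx₁ : 0 < F (M₁ * σ) - F M₁ :=
        aux_pos hcont hpos hanti hint hF ha₁.le hab₁
      have hx₂ : 0 < F (M₂ * σ) - F M₂ :=
        aux_pos hcont hpos hanti hint hF ha₂.le hab₂
      have hIdef : ∀ M : ℝ, 0 < M →
          F (M * σ) - F M = M * ∫ τ in σ..1, f (M * τ) := by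
        intro M hM
        have h := intervalIntegral.integral_comp_mul_left f (a := σ) (b := 1) hM.ne'
        rw [mul_one] at h
        rw [aux_Fdiff hint hF (mul_pos hM hσ0).le (by nlinarith), h, smul_eq_mul,
          ← mul_assoc, mul_inv_cancel₀ hM.ne', one_mul]
      have hfi : ∀ M : ℝ, 0 < M → IntervalIntegrable (fun τ => f (M * τ)) volume σ 1 := by
        intro M hM
        refine (hcont.comp (continuousOn_const.mul continuousOn_id) ?_).intervalIntegrable
        intro τ hτ
        rw [uIcc_of_le hσ1.le] at hτ
        exact mul_nonneg hM.le (hσ0.le.trans hτ.1)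
      have hI1pos : 0 < ∫ τ in σ..1, f (M₁ * τ) :=
        intervalIntegral.intervalIntegral_pos_of_pos_on (hfi M₁ hM₁)
          (fun τ hτ => hpos _ (mul_nonneg hM₁.le (hσ0.trans hτ.1).le)) hσ1
      have hIle : (∫ τ in σ..1, f (M₂ * τ)) ≤ ∫ τ in σ..1, f (M₁ * τ) := by
        refine intervalIntegral.integral_mono_on hσ1.le (hfi M₂ hM₂) (hfi M₁ hM₁) ?_
        intro τ hτ
        have hτ0 : 0 < τ := hσ0.trans_le hτ.1
        exact (hanti (mul_nonneg hM₁.le hτ0.le) (mul_nonneg hM₂.le hτ0.le)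
          (by nlinarith)).le
      have hkey : M₁ ^ 2 * (F (M₂ * σ) - F M₂) < M₂ ^ 2 * (F (M₁ * σ) - F M₁) := by
        rw [hIdef M₁ hM₁, hIdef M₂ hM₂]
        nlinarith [mul_nonneg (mul_nonneg (sq_nonneg M₁) hM₂.le)
            (sub_nonneg.mpr hIle),
          mul_pos (mul_pos (mul_pos hM₁ hM₂) (sub_pos.mpr h12)) hI1pos]
      rw [rpow_neg_half_eq hx₁.le, rpow_neg_half_eq hx₂.le,
        ← div_eq_mul_inv, ← div_eq_mul_inv]
      have hs₁ : 0 < Real.sqrt (F (M₁ * σ) - F M₁) := Real.sqrt_pos.mpr hx₁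
      have hs₂ : 0 < Real.sqrt (F (M₂ * σ) - F M₂) := Real.sqrt_pos.mpr hx₂
      rw [div_lt_div_iff₀ hs₁ hs₂]
      have e₁ : M₁ * Real.sqrt (F (M₂ * σ) - F M₂)
          = Real.sqrt (M₁ ^ 2 * (F (M₂ * σ) - F M₂)) := by
        rw [Real.sqrt_mul (sq_nonneg M₁), Real.sqrt_sq hM₁.le]
      have e₂ : M₂ * Real.sqrt (F (M₁ * σ) - F M₁)
          = Real.sqrt (M₂ ^ 2 * (F (M₁ * σ) - F M₁)) := by
        rw [Real.sqrt_mul (sq_nonneg M₂), Real.sqrt_sq hM₂.le]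
      rw [e₁, e₂]
      exact Real.sqrt_lt_sqrt (by positivity) hkey
    have hsub : 0 < ∫ σ in (0:ℝ)..1,
        (M₂ * (F (M₂ * σ) - F M₂) ^ (-(1/2) : ℝ)
          - M₁ * (F (M₁ * σ) - F M₁) ^ (-(1/2) : ℝ)) :=
      intervalIntegral.intervalIntegral_pos_of_pos_on
        ((hGint M₂ hM₂).sub (hGint M₁ hM₁))
        (fun σ hσ => sub_pos.mpr (hptw σ hσ)) one_pos
    rw [intervalIntegral.integral_sub (hGint M₂ hM₂) (hGint M₁ hM₁)] at hsub
    rw [hcv M₁ hM₁, hcv M₂ hM₂]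
    linarith
  constructor
  · intro M₁ hM₁ M₂ hM₂ h12
    have hlt : Real.sqrt (μ M₁) < Real.sqrt (μ M₂) := by
      rw [hμ M₁ hM₁, hμ M₂ hM₂]
      exact mul_lt_mul_of_pos_left (hIlt M₁ M₂ hM₁ h12) hcpos
    by_contra h
    exact absurd (Real.sqrt_le_sqrt (not_lt.mp h)) (not_le.mpr hlt)
  · -- lower bound for the square root
    have hlow : ∀ M : ℝ, 0 < M →
        c * ((F 0) ^ (-(1/2) : ℝ)) * M ≤ Real.sqrt (μ M) := by
      intro M hM
      rw [hμ M hM, mul_assoc]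
      refine mul_le_mul_of_nonneg_left ?_ hcpos.le
      have hconst : ((F 0) ^ (-(1/2) : ℝ)) * M
          = ∫ _ in (0:ℝ)..M, (F 0) ^ (-(1/2) : ℝ) := by
        rw [intervalIntegral.integral_const, smul_eq_mul]; ring
      rw [hconst]
      refine intervalIntegral.integral_mono_ae_restrict hM.le
        intervalIntegrable_const (aux_int hcont hpos hanti hint hF hM) ?_
      rw [Filter.EventuallyLE, ae_restrict_iff' measurableSet_Icc]
      have hne : ∀ᵐ x : ℝ, x ≠ M := by
        rw [ae_iff]
        simp only [not_ne_iff, setOf_eq_eq_singleton]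
        exact measure_singleton M
      filter_upwards [hne] with s hsne hs
      have hlt : s < M := lt_of_le_of_ne hs.2 hsne
      have hx : 0 < F s - F M := aux_pos hcont hpos hanti hint hF hs.1 hlt
      have hle : F s - F M ≤ F 0 := by
        have h1 : 0 ≤ F 0 - F s := aux_nonneg hcont hpos hanti hint hF le_rfl hs.1
        have h2 : 0 ≤ F M := by
          rw [hF M]
          exact setIntegral_nonneg measurableSet_Ioi fun x hx =>
            (hpos x (hM.le.trans (mem_Ioi.mp hx).le)).le
        linarith
      exact Real.rpow_le_rpow_of_nonpos hx hle (by norm_num)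
    set k : ℝ := c * (F 0) ^ (-(1/2) : ℝ) with hkdef
    have hk : 0 < k := mul_pos hcpos (Real.rpow_pos_of_pos hF0 _)
    refine tendsto_atTop_mono' atTop ?_
      ((tendsto_id (α := ℝ)).const_mul_atTop (show (0:ℝ) < k ^ 2 by positivity))
    filter_upwards [eventually_ge_atTop (1:ℝ)] with M hM1
    have hM : (0:ℝ) < M := lt_of_lt_of_le one_pos hM1
    have h1 : k * M ≤ Real.sqrt (μ M) := hlow M hM
    have h2 : (k * M) ^ 2 ≤ μ M := by
      have hsq := Real.sq_sqrt (hμnonneg M hM)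
      nlinarith [h1, mul_nonneg hk.le hM.le, Real.sqrt_nonneg (μ M)]
    show k ^ 2 * M ≤ μ M
    nlinarith [h2, hk, hM1]
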